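/- Let U, U* be d×r real matrices, and let R be an orthogonal r×r matrix minimizing ‖U − U*Z‖_F over orthogonal matrices Z. Set Δ = U − U*R, M = UU^T, M* = U*(U*)^T. Then ‖ΔΔ^T‖_F² ≤ 2‖M − M*‖_F² and σ_r(M*)·‖Δ‖_F² ≤ (1/(2(√2−1)))·‖M − M*‖_F², where σ_r(M*) is the r-th largest singular value of M*. -/

import Mathlib

open Matrix BigOperators

noncomputable section

/-- Squared Frobenius norm of a real matrix. -/
def frobSq {m n : Type*} [Fintype m] [Fintype n] (A : Matrix m n ℝ) : ℝ :=
  ∑ i, ∑ j, (A i j) ^ 2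

namespace ProcrustesAux

variable {d r : ℕ}

lemma frobSq_nonneg {m n : Type*} [Fintype m] [Fintype n] (A : Matrix m n ℝ) :
    0 ≤ frobSq A :=
  Finset.sum_nonneg fun _ _ => Finset.sum_nonneg fun _ _ => sq_nonneg _

lemma inner_trace (A B : Matrix (Fin d) (Fin r) ℝ) :
    (Aᵀ * B).trace = ∑ i, ∑ j, A i j * B i j := by
  simp [Matrix.trace, Matrix.mul_apply, Matrix.diag]
  exact Finset.sum_comm

lemma frobSq_eq_trace (A : Matrix (Fin d) (Fin r) ℝ) :
    frobSq A = (Aᵀ * A).trace := by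
  rw [inner_trace, frobSq]
  simp [sq]

lemma cyc (x y z w : Matrix (Fin d) (Fin r) ℝ) :
    ((x * yᵀ) * (z * wᵀ)).trace = ((yᵀ * z) * (wᵀ * x)).trace := by
  rw [Matrix.trace_mul_comm]
  rw [show (z * wᵀ) * (x * yᵀ) = (z * (wᵀ * x)) * yᵀ by
    simp only [Matrix.mul_assoc]]
  rw [Matrix.trace_mul_comm]
  simp only [Matrix.mul_assoc]

lemma trace_rows (Δ : Matrix (Fin d) (Fin r) ℝ) (A : Matrix (Fin r) (Fin r) ℝ) :
    (Δ * A * Δᵀ).trace = ∑ i, (Δ i) ⬝ᵥ A.mulVec (Δ i) := by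
  simp only [Matrix.trace, Matrix.mul_apply, Matrix.diag, dotProduct, Matrix.mulVec,
    Matrix.transpose_apply, Finset.mul_sum, Finset.sum_mul]
  refine Finset.sum_congr rfl fun i _ => ?_
  rw [Finset.sum_comm]
  exact Finset.sum_congr rfl fun j _ => Finset.sum_congr rfl fun k _ => by ring

lemma trace_sandwich (A : Matrix (Fin r) (Fin r) ℝ) (Δ : Matrix (Fin d) (Fin r) ℝ) :
    (A * (Δᵀ * Δ)).trace = ∑ i, (Δ i) ⬝ᵥ A.mulVec (Δ i) := by
  rw [show A * (Δᵀ * Δ) = (A * Δᵀ) * Δ from (Matrix.mul_assoc _ _ _).symm]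
  rw [Matrix.trace_mul_comm, ← Matrix.mul_assoc]
  exact trace_rows Δ A

lemma quad_outer (X : Matrix (Fin d) (Fin r) ℝ) (v : Fin r → ℝ) :
    v ⬝ᵥ (Xᵀ * X).mulVec v = (X.mulVec v) ⬝ᵥ (X.mulVec v) := by
  rw [← Matrix.mulVec_mulVec, Matrix.dotProduct_mulVec, Matrix.vecMul_transpose]

lemma cs2 (X Y : Matrix (Fin r) (Fin r) ℝ) :
    (∑ i, ∑ j, X i j * Y i j) ^ 2 ≤ frobSq X * frobSq Y := by
  have h := Finset.sum_mul_sq_le_sq_mul_sq (Finset.univ : Finset (Fin r × Fin r))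
    (fun p => X p.1 p.2) (fun p => Y p.1 p.2)
  simpa [frobSq, Fintype.sum_prod_type] using h

lemma vmv_sq (v : Fin r → ℝ) :
    vecMulVec v v * vecMulVec v v = (v ⬝ᵥ v) • vecMulVec v v := by
  ext i j
  simp only [Matrix.mul_apply, Matrix.vecMulVec_apply, Matrix.smul_apply, smul_eq_mul,
    dotProduct, Finset.sum_mul, Finset.mul_sum]
  exact Finset.sum_congr rfl fun k _ => by ring

lemma trace_vmv_mul (v : Fin r → ℝ) (S : Matrix (Fin r) (Fin r) ℝ) :
    (vecMulVec v v * S).trace = v ⬝ᵥ S.mulVec v := by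
  simp only [Matrix.trace, Matrix.diag, Matrix.mul_apply, Matrix.vecMulVec_apply,
    dotProduct, Matrix.mulVec, Finset.mul_sum]
  rw [Finset.sum_comm]
  exact Finset.sum_congr rfl fun j _ => Finset.sum_congr rfl fun i _ => by ring

lemma householder_mem (v : Fin r → ℝ) (hv : v ⬝ᵥ v = 1) :
    (1 - (2:ℝ) • vecMulVec v v) ∈ Matrix.orthogonalGroup (Fin r) ℝ := by
  rw [Matrix.mem_orthogonalGroup_iff]
  have hstar : star (1 - (2:ℝ) • vecMulVec v v) = 1 - (2:ℝ) • vecMulVec v v := by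
    simp [Matrix.star_eq_conjTranspose, Matrix.conjTranspose, Matrix.transpose_smul]
    ext i j
    simp [Matrix.vecMulVec_apply, mul_comm]
  rw [← Matrix.conjTranspose_eq_transpose_of_trivial, ← Matrix.star_eq_conjTranspose, hstar]
  rw [sub_mul, mul_sub, mul_sub]
  simp only [Matrix.one_mul, Matrix.mul_one, Matrix.smul_mul, Matrix.mul_smul, vmv_sq, hv,
    one_smul, smul_smul]
  have : ((2:ℝ) * 2) • vecMulVec v v = (2:ℝ) • vecMulVec v v + (2:ℝ) • vecMulVec v v := by
    norm_num
    module
  rw [this]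
  abel

lemma psd_of_max (S : Matrix (Fin r) (Fin r) ℝ)
    (hle : ∀ W ∈ Matrix.orthogonalGroup (Fin r) ℝ, (Wᵀ * S).trace ≤ S.trace) :
    ∀ v : Fin r → ℝ, 0 ≤ v ⬝ᵥ S.mulVec v := by
  have key : ∀ v : Fin r → ℝ, v ⬝ᵥ v = 1 → 0 ≤ v ⬝ᵥ S.mulVec v := by
    intro v hv
    have h := hle _ (householder_mem v hv)
    have ht : ((1 - (2:ℝ) • vecMulVec v v)ᵀ * S).trace
        = S.trace - 2 * (v ⬝ᵥ S.mulVec v) := by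
      have htr : (1 - (2:ℝ) • vecMulVec v v)ᵀ = 1 - (2:ℝ) • vecMulVec v v := by
        ext i j
        simp [Matrix.transpose_apply, Matrix.vecMulVec_apply, Matrix.one_apply, mul_comm]
        by_cases hij : i = j <;> simp [hij, eq_comm]
      rw [htr, Matrix.sub_mul, Matrix.one_mul, Matrix.trace_sub, Matrix.smul_mul,
        Matrix.trace_smul, trace_vmv_mul]
      simp
    rw [ht] at h
    linarith
  intro v
  by_cases hv : v = 0
  · simp [hv]
  · have hvv : 0 < v ⬝ᵥ v := by
      have h1 : v ⬝ᵥ v = ∑ i, v i ^ 2 := by simp [dotProduct, sq]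
      have h2 : 0 < ∑ i, v i ^ 2 := by
        rcases Function.ne_iff.mp hv with ⟨i, hi⟩
        have hpos : 0 < v i ^ 2 := by
          have : v i ≠ 0 := hi
          positivity
        exact Finset.sum_pos' (fun j _ => sq_nonneg _) ⟨i, Finset.mem_univ i, hpos⟩
      rw [h1]; exact h2
    set c : ℝ := (Real.sqrt (v ⬝ᵥ v))⁻¹ with hc
    have hs : Real.sqrt (v ⬝ᵥ v) > 0 := Real.sqrt_pos.mpr hvv
    have hsq : Real.sqrt (v ⬝ᵥ v) ^ 2 = v ⬝ᵥ v := Real.sq_sqrt hvv.le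
    have hunit : (c • v) ⬝ᵥ (c • v) = 1 := by
      rw [smul_dotProduct, dotProduct_smul]
      rw [smul_smul, smul_eq_mul]
      rw [hc]
      field_simp
      exact hsq.symm
    have h := key (c • v) hunit
    have hexp : (c • v) ⬝ᵥ S.mulVec (c • v) = c ^ 2 * (v ⬝ᵥ S.mulVec v) := by
      rw [Matrix.mulVec_smul, smul_dotProduct, dotProduct_smul]
      ring_nf
    rw [hexp] at h
    have hc2 : 0 < c ^ 2 := by positivity
    nlinarith

lemma single_quadform (S : Matrix (Fin r) (Fin r) ℝ) (i : Fin r) :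
    (Pi.single i (1:ℝ)) ⬝ᵥ S.mulVec (Pi.single i 1) = S i i := by
  simp [dotProduct, Matrix.mulVec, Pi.single_apply, Finset.mul_sum]

set_option maxHeartbeats 1000000 in
lemma symm_of_max (S : Matrix (Fin r) (Fin r) ℝ)
    (hle : ∀ W ∈ Matrix.orthogonalGroup (Fin r) ℝ, (Wᵀ * S).trace ≤ S.trace) :
    Sᵀ = S := by
  have hpsd := psd_of_max S hle
  ext i j
  rw [Matrix.transpose_apply]
  by_contra hb
  have hij : i ≠ j := by rintro rfl; exact hb rfl
  have hji : j ≠ i := Ne.symm hij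
  set a : ℝ := S i i + S j j with ha_def
  set b : ℝ := S j i - S i j with hb_def
  have hbne : b ≠ 0 := sub_ne_zero.mpr hb
  have hb2 : 0 < b ^ 2 := lt_of_le_of_ne (sq_nonneg b) (Ne.symm (pow_ne_zero 2 hbne))
  have ha : 0 ≤ a := by
    have h1 := hpsd (Pi.single i 1)
    have h2 := hpsd (Pi.single j 1)
    rw [single_quadform] at h1
    rw [single_quadform] at h2
    rw [ha_def]; linarith
  set h : ℝ := Real.sqrt (a^2 + b^2) with hh_def
  have hh2 : h^2 = a^2 + b^2 := Real.sq_sqrt (by positivity)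
  have hhpos : 0 < h := Real.sqrt_pos.mpr (by positivity)
  set c : ℝ := a / h with hc_def
  set s : ℝ := b / h with hs_def
  have hcs : c^2 + s^2 = 1 := by
    rw [hc_def, hs_def]
    field_simp
    linarith [hh2]
  set W : Matrix (Fin r) (Fin r) ℝ := Matrix.of fun m n =>
    if m = i then (if n = i then c else if n = j then -s else 0)
    else if m = j then (if n = i then s else if n = j then c else 0)
    else if m = n then 1 else 0 with hW_def
  have hWapp : ∀ m n, W m n =
      if m = i then (if n = i then c else if n = j then -s else 0)
      else if m = j then (if n = i then s else if n = j then c else 0)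
      else if m = n then 1 else 0 := fun m n => rfl
  have hWii : W i i = c := by rw [hWapp]; simp
  have hWij : W i j = -s := by rw [hWapp]; simp [hji]
  have hWji : W j i = s := by rw [hWapp]; simp [hij, hji]
  have hWjj : W j j = c := by rw [hWapp]; simp [hij, hji]
  have hWi0 : ∀ n, n ≠ i → n ≠ j → W i n = 0 := by
    intro n h1 h2; rw [hWapp]; simp [h1, h2]
  have hWj0 : ∀ n, n ≠ i → n ≠ j → W j n = 0 := by
    intro n h1 h2; rw [hWapp]; simp [hij, hji, h1, h2]
  have hWrow : ∀ m n, m ≠ i → m ≠ j → W m n = if m = n then 1 else 0 := by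
    intro m n h1 h2; rw [hWapp]; simp [h1, h2]
  have hsplit : ∀ f : Fin r → ℝ,
      ∑ m, f m = f i + f j + ∑ m ∈ (Finset.univ \ {i, j}), f m := by
    intro f
    rw [← Finset.sum_sdiff (Finset.subset_univ ({i, j} : Finset (Fin r))),
      Finset.sum_pair hij]
    ring
  have hmem_diff : ∀ m : Fin r, m ∈ Finset.univ \ ({i, j} : Finset (Fin r)) →
      m ≠ i ∧ m ≠ j := by
    intro m hm
    rw [Finset.mem_sdiff, Finset.mem_insert, Finset.mem_singleton] at hm
    exact ⟨fun h' => hm.2 (Or.inl h'), fun h' => hm.2 (Or.inr h')⟩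
  -- W is orthogonal
  have hWmem : W ∈ Matrix.orthogonalGroup (Fin r) ℝ := by
    rw [Matrix.mem_orthogonalGroup_iff']
    have hstar : star W = Wᵀ := by
      ext m n
      simp [Matrix.star_eq_conjTranspose, Matrix.conjTranspose_apply]
    ext k l
    rw [Matrix.mul_apply, Matrix.one_apply]
    simp only [Matrix.transpose_apply]
    rw [hsplit (fun m => W m k * W m l)]
    have hrest : ∑ m ∈ (Finset.univ \ ({i, j} : Finset (Fin r))), W m k * W m l
        = if k ∈ Finset.univ \ ({i, j} : Finset (Fin r)) then
            (if k = l then (1:ℝ) else 0) else 0 := by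
      rw [show ∑ m ∈ (Finset.univ \ ({i, j} : Finset (Fin r))), W m k * W m l
          = ∑ m ∈ (Finset.univ \ ({i, j} : Finset (Fin r))),
              (if m = k then (if m = l then (1:ℝ) else 0) else 0) from
        Finset.sum_congr rfl fun m hm => by
          obtain ⟨h1, h2⟩ := hmem_diff m hm
          rw [hWrow m k h1 h2, hWrow m l h1 h2]
          by_cases hmk : m = k <;> by_cases hml : m = l <;> simp [hmk, hml]]
      rw [Finset.sum_ite_eq' (Finset.univ \ ({i, j} : Finset (Fin r))) k
        (fun m => if m = l then (1:ℝ) else 0)]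
    rw [hrest]
    by_cases hk1 : k = i
    · subst hk1
      simp only [Finset.mem_sdiff, Finset.mem_univ, Finset.mem_insert,
        Finset.mem_singleton, true_and]
      rw [hWii, hWji]
      by_cases hl1 : l = k
      · subst hl1
        rw [hWii, hWji]
        simp only [if_pos rfl]
        simp
        nlinarith [hcs]
      · by_cases hl2 : l = j
        · subst hl2
          rw [hWij, hWjj]
          simp only [if_neg (Ne.symm hl1)]
          simp
          ring
        · rw [hWi0 l hl1 hl2, hWj0 l hl1 hl2]
          simp [Ne.symm hl1]
    · by_cases hk2 : k = j
      · subst hk2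
        simp only [Finset.mem_sdiff, Finset.mem_univ, Finset.mem_insert,
          Finset.mem_singleton, true_and]
        rw [hWij, hWjj]
        by_cases hl1 : l = i
        · subst hl1
          rw [hWii, hWji]
          simp only [if_neg hk1]
          simp [Ne.symm hk1]
          ring
        · by_cases hl2 : l = k
          · subst hl2
            rw [hWij, hWjj]
            simp only [if_pos rfl]
            simp
            nlinarith [hcs]
          · rw [hWi0 l hl1 hl2, hWj0 l hl1 hl2]
            simp [Ne.symm hl2]
      · rw [hWi0 k hk1 hk2, hWj0 k hk1 hk2]
        simp [hk1, hk2]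
  -- the trace inequality
  have hineq := hle W hWmem
  rw [inner_trace] at hineq
  have htr : Matrix.trace S = ∑ m, S m m := rfl
  rw [hsplit (fun m => ∑ n, W m n * S m n)] at hineq
  rw [htr, hsplit (fun m => S m m)] at hineq
  have hgi : ∑ n, W i n * S i n = c * S i i - s * S i j := by
    rw [hsplit (fun n => W i n * S i n)]
    rw [Finset.sum_eq_zero (fun n hn => by
      obtain ⟨h1, h2⟩ := hmem_diff n hn
      rw [hWi0 n h1 h2]; ring)]
    rw [hWii, hWij]; ring
  have hgj : ∑ n, W j n * S j n = s * S j i + c * S j j := by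
    rw [hsplit (fun n => W j n * S j n)]
    rw [Finset.sum_eq_zero (fun n hn => by
      obtain ⟨h1, h2⟩ := hmem_diff n hn
      rw [hWj0 n h1 h2]; ring)]
    rw [hWji, hWjj]; ring
  have hgm : ∀ m ∈ Finset.univ \ ({i, j} : Finset (Fin r)),
      ∑ n, W m n * S m n = S m m := by
    intro m hm
    obtain ⟨h1, h2⟩ := hmem_diff m hm
    rw [show ∑ n, W m n * S m n = ∑ n, (if m = n then S m n else 0) from
      Finset.sum_congr rfl fun n _ => by
        rw [hWrow m n h1 h2]
        by_cases hmn : m = n <;> simp [hmn]]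
    rw [Finset.sum_ite_eq]
    simp
  rw [Finset.sum_congr rfl hgm, hgi, hgj] at hineq
  have h1' : c * S i i - s * S i j + (s * S j i + c * S j j) ≤ S i i + S j j :=
    le_of_add_le_add_right hineq
  have h1 : c * a + s * b ≤ a := by
    rw [ha_def, hb_def]; nlinarith [h1']
  have h3 : c * a + s * b = h := by
    rw [hc_def, hs_def]
    field_simp
    linarith [hh2]
  have hha : a < h := by nlinarith [hh2, hhpos, ha, hb2]
  linarith

lemma F_id (B Δ : Matrix (Fin d) (Fin r) ℝ) (hQsym : (Δᵀ * B)ᵀ = Δᵀ * B) :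
    frobSq ((B + Δ) * (B + Δ)ᵀ - B * Bᵀ)
      = 2 * ((Bᵀ * B) * (Δᵀ * Δ)).trace + ((Δᵀ * Δ) * (Δᵀ * Δ)).trace
        + 2 * ((Δᵀ * B) * (Δᵀ * B)).trace + 4 * ((Δᵀ * B) * (Δᵀ * Δ)).trace := by
  have hBD : Bᵀ * Δ = Δᵀ * B := by
    rw [show Bᵀ * Δ = (Δᵀ * B)ᵀ by rw [Matrix.transpose_mul, Matrix.transpose_transpose],
      hQsym]
  have hX : (B + Δ) * (B + Δ)ᵀ - B * Bᵀ = B * Δᵀ + Δ * Bᵀ + Δ * Δᵀ := by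
    rw [Matrix.transpose_add]
    simp only [Matrix.add_mul, Matrix.mul_add]
    abel
  rw [hX, frobSq_eq_trace]
  simp only [Matrix.transpose_add, Matrix.transpose_mul, Matrix.transpose_transpose]
  simp only [Matrix.add_mul, Matrix.mul_add, Matrix.trace_add]
  rw [cyc Δ B B Δ, cyc Δ B Δ B, cyc Δ B Δ Δ, cyc B Δ B Δ, cyc B Δ Δ B, cyc B Δ Δ Δ,
    cyc Δ Δ B Δ, cyc Δ Δ Δ B, cyc Δ Δ Δ Δ]
  simp only [hBD]
  rw [Matrix.trace_mul_comm ((Δᵀ * Δ)) ((Bᵀ * B)),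
    Matrix.trace_mul_comm ((Δᵀ * Δ)) ((Δᵀ * B))]
  ring

end ProcrustesAux

open ProcrustesAux in
set_option maxHeartbeats 1000000 in
/-- Procrustes-alignment lemma: if `R` is an orthogonal matrix minimizing `‖U − U*Z‖_F`
over the orthogonal group, `Δ = U − U*R`, `M = UUᵀ`, `M* = U*(U*)ᵀ`, and `σr` is a lower
bound on the eigenvalues of `(U*)ᵀU*` (in particular `σr = σ_r(M*)`), then
`‖ΔΔᵀ‖_F² ≤ 2‖M − M*‖_F²` and `σr‖Δ‖_F² ≤ (1/(2(√2−1)))‖M − M*‖_F²`. -/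
theorem stmt2 {d r : ℕ} (U Ustar : Matrix (Fin d) (Fin r) ℝ)
    (R : Matrix (Fin r) (Fin r) ℝ) (hR : R ∈ Matrix.orthogonalGroup (Fin r) ℝ)
    (hmin : ∀ Z ∈ Matrix.orthogonalGroup (Fin r) ℝ,
      frobSq (U - Ustar * R) ≤ frobSq (U - Ustar * Z))
    (σr : ℝ)
    (hσ : ∀ x : Fin r → ℝ, σr * (∑ i, x i ^ 2) ≤ x ⬝ᵥ (Ustarᵀ * Ustar).mulVec x) :
    frobSq ((U - Ustar * R) * (U - Ustar * R)ᵀ) ≤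
        2 * frobSq (U * Uᵀ - Ustar * Ustarᵀ) ∧
      σr * frobSq (U - Ustar * R) ≤
        (1 / (2 * (Real.sqrt 2 - 1))) * frobSq (U * Uᵀ - Ustar * Ustarᵀ) := by
  have hstar_t : ∀ (A : Matrix (Fin r) (Fin r) ℝ), star A = Aᵀ := fun A => by
    ext i j; simp [Matrix.star_eq_conjTranspose, Matrix.conjTranspose_apply]
  have horth : ∀ Z ∈ Matrix.orthogonalGroup (Fin r) ℝ, Z * Zᵀ = 1 ∧ Zᵀ * Z = 1 := by
    intro Z hZ
    constructor
    · rw [← hstar_t Z]; exact (Matrix.mem_orthogonalGroup_iff _ _).mp hZ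
    · rw [← hstar_t Z]; exact (Matrix.mem_orthogonalGroup_iff' _ _).mp hZ
  obtain ⟨hR1, hR2⟩ := horth R hR
  have hexpand : ∀ Z : Matrix (Fin r) (Fin r) ℝ, Z * Zᵀ = 1 →
      frobSq (U - Ustar * Z) = (Uᵀ * U).trace - 2 * (((Ustar * Z)ᵀ) * U).trace
        + (Ustarᵀ * Ustar).trace := by
    intro Z hZ
    rw [frobSq_eq_trace]
    rw [Matrix.transpose_sub]
    rw [Matrix.sub_mul, Matrix.mul_sub, Matrix.mul_sub]
    rw [Matrix.trace_sub, Matrix.trace_sub, Matrix.trace_sub]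
    have h1 : (Uᵀ * (Ustar * Z)).trace = ((Ustar * Z)ᵀ * U).trace := by
      rw [← Matrix.trace_transpose (Uᵀ * (Ustar * Z)), Matrix.transpose_mul,
        Matrix.transpose_transpose]
    have h2 : ((Ustar * Z)ᵀ * (Ustar * Z)).trace = (Ustarᵀ * Ustar).trace := by
      rw [Matrix.transpose_mul]
      rw [show Zᵀ * Ustarᵀ * (Ustar * Z) = Zᵀ * (Ustarᵀ * Ustar * Z) by
        simp only [Matrix.mul_assoc]]
      rw [Matrix.trace_mul_comm]
      rw [show Ustarᵀ * Ustar * Z * Zᵀ = Ustarᵀ * Ustar * (Z * Zᵀ) by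
        simp only [Matrix.mul_assoc]]
      rw [hZ, Matrix.mul_one]
    rw [h1, h2]; ring
  have hle : ∀ W ∈ Matrix.orthogonalGroup (Fin r) ℝ,
      (Wᵀ * ((Ustar * R)ᵀ * U)).trace ≤ ((Ustar * R)ᵀ * U).trace := by
    intro W hW
    have hZmem : R * W ∈ Matrix.orthogonalGroup (Fin r) ℝ := mul_mem hR hW
    have h := hmin (R * W) hZmem
    rw [hexpand R hR1, hexpand (R * W) (horth _ hZmem).1] at h
    have h' : ((Ustar * (R * W))ᵀ * U).trace ≤ ((Ustar * R)ᵀ * U).trace := by linarith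
    rw [show (Ustar * (R * W))ᵀ * U = Wᵀ * ((Ustar * R)ᵀ * U) by
      simp only [Matrix.transpose_mul, Matrix.mul_assoc]] at h'
    exact h'
  have hSpsd := psd_of_max _ hle
  have hSsym := symm_of_max _ hle
  set B := Ustar * R with hB
  set Δ := U - B with hΔ
  have hUBD : U = B + Δ := by rw [hΔ]; abel
  have hUB : Uᵀ * B = Bᵀ * U := by
    have h := hSsym
    rwa [Matrix.transpose_mul, Matrix.transpose_transpose] at h
  have hTsym : (Δᵀ * Δ)ᵀ = Δᵀ * Δ := by
    rw [Matrix.transpose_mul, Matrix.transpose_transpose]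
  have hQsym : (Δᵀ * B)ᵀ = Δᵀ * B := by
    rw [hΔ]
    simp only [Matrix.transpose_sub, Matrix.transpose_mul, Matrix.transpose_transpose,
      Matrix.sub_mul, Matrix.mul_sub]
    rw [hUB]
  have hSGQ : Bᵀ * U = Bᵀ * B + Δᵀ * B := by
    rw [hΔ]
    simp only [Matrix.transpose_sub, Matrix.sub_mul]
    rw [hUB]
    abel
  have hMstar : Ustar * Ustarᵀ = B * Bᵀ := by
    rw [hB, Matrix.transpose_mul]
    rw [show Ustar * R * (Rᵀ * Ustarᵀ) = Ustar * (R * Rᵀ) * Ustarᵀ by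
      simp only [Matrix.mul_assoc]]
    rw [hR1, Matrix.mul_one]
  set gt := ((Bᵀ * B) * (Δᵀ * Δ)).trace with hgt
  set qt := ((Δᵀ * B) * (Δᵀ * Δ)).trace with hqt
  set q2 := frobSq (Δᵀ * B) with hq2
  set t2 := frobSq (Δᵀ * Δ) with ht2
  set tT := (Δᵀ * Δ).trace with htT
  have hq2' : ((Δᵀ * B) * (Δᵀ * B)).trace = q2 := by
    rw [hq2, frobSq_eq_trace, hQsym]
  have ht2' : ((Δᵀ * Δ) * (Δᵀ * Δ)).trace = t2 := by
    rw [ht2, frobSq_eq_trace, hTsym]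
  have hF : frobSq (U * Uᵀ - Ustar * Ustarᵀ) = 2*gt + t2 + 2*q2 + 4*qt := by
    rw [hMstar, hUBD, F_id B Δ hQsym, hq2', ht2']
  have hDD : frobSq (Δ * Δᵀ) = t2 := by
    rw [frobSq_eq_trace]
    rw [show (Δ * Δᵀ)ᵀ = Δ * Δᵀ by rw [Matrix.transpose_mul, Matrix.transpose_transpose]]
    rw [cyc Δ Δ Δ Δ, ht2']
  have hfrobΔ : frobSq Δ = tT := frobSq_eq_trace Δ
  have hdotself : ∀ (m : ℕ) (w : Fin m → ℝ), 0 ≤ w ⬝ᵥ w := by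
    intro m w
    simp only [dotProduct]
    exact Finset.sum_nonneg fun k _ => mul_self_nonneg _
  have hgt0 : 0 ≤ gt := by
    rw [hgt, trace_sandwich]
    refine Finset.sum_nonneg fun i _ => ?_
    rw [quad_outer]
    exact hdotself _ _
  have hst : 0 ≤ gt + qt := by
    have h0 : 0 ≤ ((Bᵀ * U) * (Δᵀ * Δ)).trace := by
      rw [trace_sandwich]
      exact Finset.sum_nonneg fun i _ => hSpsd (Δ i)
    rw [hSGQ, Matrix.add_mul, Matrix.trace_add] at h0
    rw [hgt, hqt]
    linarith
  have hσT : σr * tT ≤ gt := by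
    have hTsum : tT = ∑ i, (Δ i) ⬝ᵥ (1 : Matrix (Fin r) (Fin r) ℝ).mulVec (Δ i) := by
      rw [htT, ← Matrix.one_mul (Δᵀ * Δ)]
      exact trace_sandwich 1 Δ
    rw [hgt, trace_sandwich, hTsum, Finset.mul_sum]
    refine Finset.sum_le_sum fun i _ => ?_
    rw [Matrix.one_mulVec]
    set v := Δ i with hv
    have h1 : v ⬝ᵥ (Bᵀ * B).mulVec v = (B.mulVec v) ⬝ᵥ (B.mulVec v) := quad_outer B v
    have h2 : B.mulVec v = Ustar.mulVec (R.mulVec v) := by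
      rw [hB, ← Matrix.mulVec_mulVec]
    have h3 : (R.mulVec v) ⬝ᵥ (Ustarᵀ * Ustar).mulVec (R.mulVec v)
        = (Ustar.mulVec (R.mulVec v)) ⬝ᵥ (Ustar.mulVec (R.mulVec v)) :=
      quad_outer Ustar _
    have h4 := hσ (R.mulVec v)
    have hRv : v ⬝ᵥ v = (R.mulVec v) ⬝ᵥ (R.mulVec v) := by
      have h5 := quad_outer R v
      rwa [hR2, Matrix.one_mulVec] at h5
    have hsum : ∑ k, (R.mulVec v) k ^ 2 = v ⬝ᵥ v := by
      rw [hRv]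
      simp [dotProduct, sq]
    calc σr * (v ⬝ᵥ v) = σr * (∑ k, (R.mulVec v) k ^ 2) := by rw [hsum]
      _ ≤ (R.mulVec v) ⬝ᵥ (Ustarᵀ * Ustar).mulVec (R.mulVec v) := h4
      _ = (B.mulVec v) ⬝ᵥ (B.mulVec v) := by rw [h3, ← h2]
      _ = v ⬝ᵥ (Bᵀ * B).mulVec v := h1.symm
  have hqtinner : qt = ∑ i, ∑ j, (Δᵀ * B) i j * (Δᵀ * Δ) i j := by
    rw [hqt, ← inner_trace, hQsym]
  have hcs : qt ^ 2 ≤ q2 * t2 := by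
    rw [hqtinner, hq2, ht2]
    exact cs2 _ _
  have hq20 : 0 ≤ q2 := by rw [hq2]; exact frobSq_nonneg _
  have ht20 : 0 ≤ t2 := by rw [ht2]; exact frobSq_nonneg _
  have hTQ : 0 ≤ t2 + 4*qt + 4*q2 := by
    have hexp2 : t2 + 4*qt + 4*q2
        = ∑ i, ∑ j, ((Δᵀ * Δ) i j + 2 * (Δᵀ * B) i j) ^ 2 := by
      rw [ht2, hq2, hqtinner, frobSq, frobSq]
      rw [Finset.mul_sum, Finset.mul_sum]
      simp only [Finset.mul_sum]
      rw [← Finset.sum_add_distrib, ← Finset.sum_add_distrib]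
      refine Finset.sum_congr rfl fun i _ => ?_
      rw [← Finset.sum_add_distrib, ← Finset.sum_add_distrib]
      exact Finset.sum_congr rfl fun j _ => by ring
    rw [hexp2]
    exact Finset.sum_nonneg fun i _ => Finset.sum_nonneg fun j _ => sq_nonneg _
  set s2 := Real.sqrt 2 with hs2
  have hs2sq : s2 ^ 2 = 2 := Real.sq_sqrt (by norm_num)
  have hs2gt : 1 < s2 := by nlinarith [Real.sqrt_nonneg 2]
  constructor
  · rw [hDD, hF]
    linarith [hst, hTQ, hgt0]
  · rw [hfrobΔ, hF]
    set u := Real.sqrt t2 with hu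
    set w := Real.sqrt q2 with hw
    have hu2 : u ^ 2 = t2 := Real.sq_sqrt ht20
    have hw2 : w ^ 2 = q2 := Real.sq_sqrt hq20
    have hu0 : 0 ≤ u := Real.sqrt_nonneg _
    have hw0 : 0 ≤ w := Real.sqrt_nonneg _
    have hqtlow : -(u * w) ≤ qt := by
      nlinarith [hcs, mul_nonneg hu0 hw0, sq_nonneg (qt + u * w)]
    have hcpos : 0 < 2 * (s2 - 1) := by linarith
    have hs2lt2 : s2 < 2 := by nlinarith
    have key : 2 * (s2 - 1) * gt ≤ 2*gt + t2 + 2*q2 + 4*qt := by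
      have hterm1 : 0 ≤ (4 - 2*s2) * (gt + qt) := mul_nonneg (by linarith) hst
      have hterm3 : 0 ≤ 2*s2*(qt + u*w) := mul_nonneg (by linarith) (by linarith)
      nlinarith [hterm1, hterm3, sq_nonneg (u - s2*w)]
    calc σr * tT ≤ gt := hσT
      _ ≤ (1/(2*(s2-1))) * (2*gt + t2 + 2*q2 + 4*qt) := by
          rw [show (1/(2*(s2-1))) * (2*gt + t2 + 2*q2 + 4*qt)
              = (2*gt + t2 + 2*q2 + 4*qt)/(2*(s2-1)) by ring]
          rw [le_div_iff₀ hcpos]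
          linarith [key]
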